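/- Foata's bijection φ : S_n → S_n satisfies Des(w^{-1}) = Des(φ(w)^{-1}) for all w ∈ S_n. -/

import Mathlib

open Finset Polynomial
open scoped Classical

/-- Helper for Foata's bijection: split the list into compartments ending at
each letter satisfying `c`, and cyclically shift each compartment one position
to the right.  The first argument accumulates the current compartment
(in reverse). -/
def foataShift (c : ℕ → Bool) : List ℕ → List ℕ → List ℕ
  | acc, [] => acc.reverse
  | acc, x :: xs =>
    if c x then x :: (acc.reverse ++ foataShift c [] xs)
    else foataShift c (x :: acc) xs

/-- One step of Foata's bijection: incorporate the next letter `a` into the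
already-built word `γ`.  If the last letter of `γ` is greater than `a`, split
`γ` after each letter greater than `a`; otherwise split after each letter
smaller than `a`; cyclically shift each compartment to the right and append
`a`. -/
def foataStep (a : ℕ) (γ : List ℕ) : List ℕ :=
  match γ.getLast? with
  | none => [a]
  | some b =>
    (if a < b then foataShift (fun x => decide (a < x)) [] γ
     else foataShift (fun x => decide (x < a)) [] γ) ++ [a]

/-- Foata's bijection on words. -/
def foata (w : List ℕ) : List ℕ := w.foldl (fun γ a => foataStep a γ) []

/-- The descent set of a permutation `σ` of `Fin n`, viewed as the word
`σ(0) σ(1) ⋯ σ(n-1)`. -/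
def desSet {n : ℕ} (σ : Equiv.Perm (Fin n)) : Set (Fin n) :=
  {i | ∃ h : (i : ℕ) + 1 < n, σ ⟨(i : ℕ) + 1, h⟩ < σ i}

lemma foataShift_perm (c : ℕ → Bool) :
    ∀ (l acc : List ℕ), (foataShift c acc l).Perm (acc.reverse ++ l) := by
  intro l
  induction l with
  | nil => intro acc; simp [foataShift]
  | cons x xs ih =>
    intro acc
    rw [foataShift]
    split
    · refine List.Perm.trans (List.Perm.cons _ (((ih []).append_left _))) ?_
      simpa using (List.perm_middle (a := x) (l₁ := acc.reverse) (l₂ := xs)).symm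
    · have := ih (x :: acc)
      simpa using this

lemma foataShift_filter (c p : ℕ → Bool) (b : Bool) (hp : ∀ z, p z = true → c z = b) :
    ∀ (l acc : List ℕ), (∀ z ∈ acc, c z = false) →
      (foataShift c acc l).filter p = ((acc.reverse ++ l)).filter p := by
  intro l
  induction l with
  | nil => intro acc _; simp [foataShift]
  | cons x xs ih =>
    intro acc hacc
    rw [foataShift]
    split
    · rename_i hc
      by_cases hpx : p x = true
      · have hb : b = true := (hp x hpx ▸ hc).symm ▸ rfl
        have hb' : b = true := by rw [← hp x hpx]; exact hc
        have hfacc : acc.reverse.filter p = [] := by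
          apply List.filter_eq_nil_iff.2
          intro z hz
          simp only [List.mem_reverse] at hz
          intro hpz
          have := hp z hpz
          rw [hacc z hz] at this
          rw [← this] at hb'
          exact absurd hb' (by simp)
        simp only [List.filter_cons, hpx, List.filter_append, hfacc, ih [] (by simp)]
        simp
      · simp only [List.filter_cons, List.filter_append, hpx, ih [] (by simp)]
        simp [List.filter_append, hpx]
    · rename_i hc
      have hacc' : ∀ z ∈ x :: acc, c z = false := by
        intro z hz
        rcases List.mem_cons.1 hz with rfl | hmem
        · simpa using hc
        · exact hacc z hmem
      rw [ih (x :: acc) hacc']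
      simp

lemma foataShift_perm' (c : ℕ → Bool) (γ : List ℕ) : (foataShift c [] γ).Perm γ := by
  simpa using foataShift_perm c γ []

lemma foataStep_perm (a : ℕ) (γ : List ℕ) : (foataStep a γ).Perm (γ ++ [a]) := by
  cases hlast : γ.getLast? with
  | none =>
    have : γ = [] := List.getLast?_eq_none_iff.mp hlast
    subst this; simp [foataStep]
  | some b =>
    simp only [foataStep, hlast]
    split <;> exact (foataShift_perm' _ γ).append_right [a]

lemma nodup_all_eq {l : List ℕ} {y : ℕ} (hl : l.Nodup) (h : ∀ z ∈ l, z = y) :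
    l = [] ∨ l = [y] := by
  cases l with
  | nil => exact Or.inl rfl
  | cons a t =>
    right
    have ha : a = y := h a (by simp)
    subst ha
    have ht : t = [] := by
      cases t with
      | nil => rfl
      | cons b t' =>
        have hb : b = a := h b (by simp)
        simp [hb] at hl
    simp [ht]

lemma foataStep_filter (x a : ℕ) (γ : List ℕ) (hγ : γ.Nodup) (ha : a ∉ γ) :
    (foataStep a γ).filter (fun z => decide (z = x ∨ z = x + 1)) =
      (γ ++ [a]).filter (fun z => decide (z = x ∨ z = x + 1)) := by
  set p : ℕ → Bool := fun z => decide (z = x ∨ z = x + 1) with hp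
  cases hlast : γ.getLast? with
  | none =>
    have : γ = [] := List.getLast?_eq_none_iff.mp hlast
    subst this; simp [foataStep]
  | some b =>
    have main : ∀ c : ℕ → Bool, (a < b → c = fun z => decide (a < z)) →
        (¬ a < b → c = fun z => decide (z < a)) →
        (foataShift c [] γ).filter p = γ.filter p := by
      intro c hc1 hc2
      by_cases hpa : a = x ∨ a = x + 1
      · -- a is one of the pair; at most one pair element is in γ
        obtain ⟨y, hy⟩ : ∃ y, ∀ z ∈ γ.filter p, z = y := by
          rcases hpa with rfl | rfl
          · refine ⟨a + 1, fun z hz => ?_⟩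
            have hzγ := List.mem_of_mem_filter hz
            have hpz := List.of_mem_filter hz
            simp only [hp, decide_eq_true_eq] at hpz
            rcases hpz with rfl | h
            · exact absurd hzγ ha
            · exact h
          · refine ⟨x, fun z hz => ?_⟩
            have hzγ := List.mem_of_mem_filter hz
            have hpz := List.of_mem_filter hz
            simp only [hp, decide_eq_true_eq] at hpz
            rcases hpz with h | rfl
            · exact h
            · exact absurd hzγ ha
        have hperm : ((foataShift c [] γ).filter p).Perm (γ.filter p) :=
          (foataShift_perm' c γ).filter p
        rcases nodup_all_eq (hγ.filter p) hy with he | he <;> rw [he] at hperm ⊢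
        · exact List.perm_nil.mp hperm
        · exact List.perm_singleton.mp hperm
      · push_neg at hpa
        obtain ⟨hax, hax1⟩ := hpa
        have hcx : c x = c (x + 1) := by
          by_cases hab : a < b
          · rw [hc1 hab]; simp only [decide_eq_decide]; omega
          · rw [hc2 hab]; simp only [decide_eq_decide]; omega
        have hpc : ∀ z, p z = true → c z = c x := by
          intro z hz
          simp only [hp, decide_eq_true_eq] at hz
          rcases hz with rfl | rfl
          · rfl
          · exact hcx.symm
        simpa using foataShift_filter c p (c x) hpc γ [] (by simp)
    simp only [foataStep, hlast, List.filter_append]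
    split
    · rename_i hb; rw [main _ (fun _ => rfl) (fun h => absurd hb h)]
    · rename_i hb; rw [main _ (fun h => absurd h hb) (fun _ => rfl)]

lemma foata_foldl_perm : ∀ (w γ : List ℕ),
    (w.foldl (fun γ a => foataStep a γ) γ).Perm (γ ++ w) := by
  intro w
  induction w with
  | nil => intro γ; simp
  | cons a xs ih =>
    intro γ
    simp only [List.foldl_cons]
    refine (ih (foataStep a γ)).trans ?_
    have := (foataStep_perm a γ).append_right xs
    simpa using this

lemma foata_perm (w : List ℕ) : (foata w).Perm w := by
  simpa [foata] using foata_foldl_perm w []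

lemma foata_foldl_filter (x : ℕ) : ∀ (w γ : List ℕ), γ.Nodup → (∀ z ∈ w, z ∉ γ) →
    w.Nodup →
    (w.foldl (fun γ a => foataStep a γ) γ).filter (fun z => decide (z = x ∨ z = x + 1)) =
      (γ ++ w).filter (fun z => decide (z = x ∨ z = x + 1)) := by
  intro w
  induction w with
  | nil => intro γ _ _ _; simp
  | cons a xs ih =>
    intro γ hγ hw hnw
    simp only [List.foldl_cons]
    have ha : a ∉ γ := hw a (by simp)
    have hγ' : (foataStep a γ).Nodup := by
      refine (foataStep_perm a γ).nodup_iff.mpr ?_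
      simp [List.nodup_append, hγ, ha]
      intro z hz hza; exact ha (hza ▸ hz)
    have hw' : ∀ z ∈ xs, z ∉ foataStep a γ := by
      intro z hz hzin
      have : z ∈ γ ++ [a] := (foataStep_perm a γ).mem_iff.mp hzin
      rcases List.mem_append.mp this with h | h
      · exact hw z (by simp [hz]) h
      · simp only [List.mem_singleton] at h
        subst h
        exact (List.nodup_cons.mp hnw).1 hz
    rw [ih (foataStep a γ) hγ' hw' (List.nodup_cons.mp hnw).2,
      List.filter_append, foataStep_filter x a γ hγ ha]
    simp only [List.filter_append, List.filter_cons, List.filter_nil, List.append_assoc,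
      List.nil_append]
    rcases h : (fun z => decide (z = x ∨ z = x + 1)) a with _ | _ <;> simp_all

lemma foata_filter (x : ℕ) (w : List ℕ) (hw : w.Nodup) :
    (foata w).filter (fun z => decide (z = x ∨ z = x + 1)) =
      w.filter (fun z => decide (z = x ∨ z = x + 1)) := by
  simpa [foata] using foata_foldl_filter x w [] (by simp) (by simp) hw

lemma pair_sublist_ofFn {n : ℕ} (f : Fin n → ℕ) {u v : ℕ}
    (h : List.Sublist [u, v] (List.ofFn f)) : ∃ j k : Fin n, j < k ∧ f j = u ∧ f k = v := by
  obtain ⟨e, he⟩ := List.sublist_iff_exists_fin_orderEmbedding_get_eq.mp h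
  have h0 : (0 : ℕ) < [u, v].length := by norm_num
  have h1 : (1 : ℕ) < [u, v].length := by norm_num
  have hjk : e ⟨0, h0⟩ < e ⟨1, h1⟩ := e.strictMono (by simp [Fin.lt_def])
  have hg0 : (List.ofFn f).get (e ⟨0, h0⟩) = u := by rw [← he ⟨0, h0⟩]; rfl
  have hg1 : (List.ofFn f).get (e ⟨1, h1⟩) = v := by rw [← he ⟨1, h1⟩]; rfl
  rw [List.get_ofFn] at hg0 hg1
  exact ⟨_, _, by simpa [Fin.lt_def] using hjk, hg0, hg1⟩

lemma filter_pair_cases {l : List ℕ} (hl : l.Nodup) {x : ℕ} (hx : x ∈ l)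
    (hx1 : x + 1 ∈ l) :
    l.filter (fun z => decide (z = x ∨ z = x + 1)) = [x, x + 1] ∨
      l.filter (fun z => decide (z = x ∨ z = x + 1)) = [x + 1, x] := by
  set p : ℕ → Bool := fun z => decide (z = x ∨ z = x + 1) with hp
  have hm : (l.filter p).Nodup := hl.filter p
  have hxm : x ∈ l.filter p := List.mem_filter.mpr ⟨hx, by simp [hp]⟩
  have hx1m : x + 1 ∈ l.filter p := List.mem_filter.mpr ⟨hx1, by simp [hp]⟩
  have hall : ∀ z ∈ l.filter p, z = x ∨ z = x + 1 := by
    intro z hz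
    have := List.of_mem_filter hz
    simpa [hp] using this
  cases hfl : l.filter p with
  | nil => rw [hfl] at hxm; simp at hxm
  | cons a t =>
    rw [hfl] at hm hxm hx1m hall
    rcases hall a (by simp) with rfl | rfl
    · left
      have hat : a ∉ t := (List.nodup_cons.mp hm).1
      have ht1 : a + 1 ∈ t := by
        rcases List.mem_cons.mp hx1m with h | h
        · omega
        · exact h
      have hTall : ∀ z ∈ t, z = a + 1 := by
        intro z hz
        rcases hall z (by simp [hz]) with rfl | h
        · exact absurd hz hat
        · exact h
      rcases nodup_all_eq (List.nodup_cons.mp hm).2 hTall with he | he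
      · rw [he] at ht1; simp at ht1
      · rw [he]
    · right
      have hat : x + 1 ∉ t := (List.nodup_cons.mp hm).1
      have ht1 : x ∈ t := by
        rcases List.mem_cons.mp hxm with h | h
        · omega
        · exact h
      have hTall : ∀ z ∈ t, z = x := by
        intro z hz
        rcases hall z (by simp [hz]) with h | rfl
        · exact h
        · exact absurd hz hat
      rcases nodup_all_eq (List.nodup_cons.mp hm).2 hTall with he | he
      · rw [he] at ht1; simp at ht1
      · rw [he]

lemma mem_desSet_inv_iff {n : ℕ} (σ : Equiv.Perm (Fin n)) (i : Fin n) :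
    i ∈ desSet σ⁻¹ ↔
      (List.ofFn fun j => ((σ j : ℕ))).filter
        (fun z => decide (z = (i : ℕ) ∨ z = (i : ℕ) + 1)) = [(i : ℕ) + 1, (i : ℕ)] := by
  have hl : (List.ofFn fun j => ((σ j : ℕ))).Nodup :=
    List.nodup_ofFn.mpr (Fin.val_injective.comp σ.injective)
  have hx : (i : ℕ) ∈ List.ofFn fun j => ((σ j : ℕ)) := by
    rw [List.mem_ofFn]
    exact ⟨σ⁻¹ i, by simp⟩
  simp only [desSet, Set.mem_setOf_eq]
  constructor
  · rintro ⟨h1, h2⟩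
    have hx1 : (i : ℕ) + 1 ∈ List.ofFn fun j => ((σ j : ℕ)) := by
      rw [List.mem_ofFn]
      exact ⟨σ⁻¹ ⟨(i : ℕ) + 1, h1⟩, by simp⟩
    rcases filter_pair_cases hl hx hx1 with hf | hf
    · exfalso
      have hsub : List.Sublist [(i : ℕ), (i : ℕ) + 1] (List.ofFn fun j => ((σ j : ℕ))) := by
        rw [← hf]; exact List.filter_sublist
      obtain ⟨j, k, hjk, hj, hk⟩ := pair_sublist_ofFn _ hsub
      have hji : σ j = i := Fin.ext hj
      have hki : σ k = ⟨(i : ℕ) + 1, h1⟩ := Fin.ext hk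
      have e1 : σ⁻¹ i = j := by rw [← hji]; simp
      have e2 : σ⁻¹ ⟨(i : ℕ) + 1, h1⟩ = k := by rw [← hki]; simp
      rw [e1, e2] at h2
      exact lt_asymm hjk h2
    · exact hf
  · intro hf
    have hsub : List.Sublist [(i : ℕ) + 1, (i : ℕ)] (List.ofFn fun j => ((σ j : ℕ))) := by
      rw [← hf]; exact List.filter_sublist
    obtain ⟨j, k, hjk, hj, hk⟩ := pair_sublist_ofFn _ hsub
    have h1 : (i : ℕ) + 1 < n := by rw [← hj]; exact (σ j).isLt
    refine ⟨h1, ?_⟩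
    have hji : σ j = ⟨(i : ℕ) + 1, h1⟩ := Fin.ext hj
    have hki : σ k = i := Fin.ext hk
    have e1 : σ⁻¹ ⟨(i : ℕ) + 1, h1⟩ = j := by rw [← hji]; simp
    have e2 : σ⁻¹ i = k := by rw [← hki]; simp
    rw [e1, e2]
    exact hjk

/-- Foata's bijection preserves the inverse descent set: if the word of the
permutation `τ` is the image under Foata's bijection of the word of `σ`, then
`Des(σ⁻¹) = Des(τ⁻¹)`. -/
theorem foata_inverse_descent_set (n : ℕ) (σ τ : Equiv.Perm (Fin n))
    (h : List.ofFn (fun i => ((τ i : ℕ))) =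
      foata (List.ofFn fun i => ((σ i : ℕ)))) :
    desSet σ⁻¹ = desSet τ⁻¹ := by
  have hl : (List.ofFn fun j => ((σ j : ℕ))).Nodup :=
    List.nodup_ofFn.mpr (Fin.val_injective.comp σ.injective)
  ext i
  rw [mem_desSet_inv_iff σ i, mem_desSet_inv_iff τ i, h,
    foata_filter (i : ℕ) _ hl]
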